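/- Let V be a finite-dimensional real vector space and let ω be a nondegenerate alternating bilinear form on V. Then there exists a linear map J : V → V with J ∘ J = −id_V which is compatible with ω, meaning: ω(Jx, Jy) = ω(x, y) for all x, y ∈ V, and the bilinear form g(x, y) = ω(x, Jy) is symmetric and positive definite. -/

import Mathlib

open Module

universe u

set_option maxHeartbeats 2000000 in
private lemma aux_compatible : ∀ (n : ℕ) {V : Type u} [AddCommGroup V] [Module ℝ V]
    [FiniteDimensional ℝ V] (ω : V →ₗ[ℝ] V →ₗ[ℝ] ℝ),
    Module.finrank ℝ V ≤ n → (∀ x : V, ω x x = 0) →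
    (∀ x : V, (∀ y : V, ω x y = 0) → x = 0) →
    ∃ J : V →ₗ[ℝ] V,
      J ∘ₗ J = -LinearMap.id ∧
      (∀ x y : V, ω (J x) (J y) = ω x y) ∧
      (∀ x y : V, ω x (J y) = ω y (J x)) ∧
      (∀ x : V, x ≠ 0 → 0 < ω x (J x)) := by
  intro n
  induction n using Nat.strong_induction_on with
  | _ n IH =>
    intro V _ _ _ ω hrank halt hnondeg
    have hskew : ∀ u v : V, ω u v = -ω v u := by
      intro u v
      have h := halt (u + v)
      simp only [map_add, LinearMap.add_apply] at h
      rw [halt u, halt v] at h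
      linarith
    by_cases hV : ∃ x : V, x ≠ 0
    · obtain ⟨x, hx⟩ := hV
      obtain ⟨y', hy'⟩ : ∃ y' : V, ω x y' ≠ 0 := by
        by_contra h
        push_neg at h
        exact hx (hnondeg x h)
      set y : V := (ω x y')⁻¹ • y' with hy_def
      have hxy : ω x y = 1 := by
        simp [hy_def, inv_mul_cancel₀ hy']
      have hyx : ω y x = -1 := by rw [hskew, hxy]
      -- the symplectic complement of span {x, y}
      set W : Submodule ℝ V := LinearMap.ker (ω x) ⊓ LinearMap.ker (ω y) with hW_def
      have hmemW : ∀ v : V, v ∈ W ↔ ω x v = 0 ∧ ω y v = 0 := by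
        intro v
        simp [hW_def, LinearMap.mem_ker]
      -- projection onto W
      set p : V →ₗ[ℝ] V := LinearMap.id - (ω x).smulRight y + (ω y).smulRight x with hp_def
      have hpapp : ∀ v : V, p v = v - ω x v • y + ω y v • x := by
        intro v; simp [hp_def]
      have hpmem : ∀ v : V, p v ∈ W := by
        intro v
        rw [hmemW]
        constructor
        · rw [hpapp]
          simp [map_add, map_sub, map_smul, hxy, halt x]
        · rw [hpapp]
          simp [map_add, map_sub, map_smul, hyx, halt y]
      set π : V →ₗ[ℝ] W := p.codRestrict W hpmem with hπ_def
      have hπapp : ∀ v : V, (π v : V) = v - ω x v • y + ω y v • x := by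
        intro v; rw [hπ_def, LinearMap.codRestrict_apply]; exact hpapp v
      have hWx : ∀ w : W, ω x (w : V) = 0 := fun w => ((hmemW w).1 w.2).1
      have hWy : ∀ w : W, ω y (w : V) = 0 := fun w => ((hmemW w).1 w.2).2
      have hxW : ∀ w : W, ω (w : V) x = 0 := by intro w; rw [hskew, hWx w, neg_zero]
      have hyW : ∀ w : W, ω (w : V) y = 0 := by intro w; rw [hskew, hWy w, neg_zero]
      -- the master decomposition formula
      have hstepB : ∀ (w : W) (u : V), ω (w : V) u = ω (w : V) ((π u : V)) := by
        intro w u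
        rw [hπapp]
        simp only [map_add, map_sub, map_smul, smul_eq_mul, hxW w, hyW w]
        ring
      have hω : ∀ v u : V, ω v u = ω x v * ω y u - ω y v * ω x u
          + ω ((π v : V)) ((π u : V)) := by
        intro v u
        have hv : v = ω x v • y - ω y v • x + (π v : V) := by
          rw [hπapp]; abel
        nth_rewrite 1 [hv]
        simp only [map_add, map_sub, map_smul, LinearMap.add_apply, LinearMap.sub_apply,
          LinearMap.smul_apply, smul_eq_mul]
        rw [hstepB (π v) u]
      -- restricted form on W
      set ω' : W →ₗ[ℝ] W →ₗ[ℝ] ℝ := ω.compl₁₂ W.subtype W.subtype with hω'_def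
      have hω'app : ∀ w w' : W, ω' w w' = ω (w : V) (w' : V) := by
        intro w w'; rfl
      have halt' : ∀ w : W, ω' w w = 0 := fun w => halt (w : V)
      have hnondeg' : ∀ w : W, (∀ w' : W, ω' w w' = 0) → w = 0 := by
        intro w hw
        have : (w : V) = 0 := by
          apply hnondeg
          intro u
          have hπw : π (w : V) = w := by
            apply Subtype.ext
            rw [hπapp, hWx w, hWy w]
            simp
          rw [hω (w : V) u, hWx w, hWy w, hπw]
          have h0 := hw (π u)
          rw [hω'app] at h0
          rw [h0]
          ring
        exact Subtype.ext this
      have hWlt : finrank ℝ W < n := by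
        refine lt_of_lt_of_le ?_ hrank
        have hWne : W ≠ ⊤ := by
          intro hWtop
          have hxW' : x ∈ W := hWtop ▸ Submodule.mem_top
          have h2 := ((hmemW x).1 hxW').2
          rw [hyx] at h2
          norm_num at h2
        exact Submodule.finrank_lt hWne
      obtain ⟨J', hJ2, hJc, hJs, hJp⟩ :=
        IH (finrank ℝ W) hWlt ω' le_rfl halt' hnondeg'
      have hJ'2 : ∀ w : W, J' (J' w) = -w := by
        intro w
        have := congrFun (congrArg DFunLike.coe hJ2) w
        simpa using this
      -- the complex structure
      set J : V →ₗ[ℝ] V :=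
        -(ω y).smulRight y - (ω x).smulRight x + W.subtype ∘ₗ J' ∘ₗ π with hJ_def
      have hJapp : ∀ v : V, J v = -(ω y v) • y - ω x v • x + (J' (π v) : V) := by
        intro v; simp [hJ_def, neg_smul]
      have haJ : ∀ v : V, ω x (J v) = -ω y v := by
        intro v
        rw [hJapp]
        simp [map_add, map_sub, map_smul, hxy, halt x, hWx]
      have hbJ : ∀ v : V, ω y (J v) = ω x v := by
        intro v
        rw [hJapp]
        simp [map_add, map_sub, map_smul, hyx, halt y, hWy]
      have hπJ : ∀ v : V, π (J v) = J' (π v) := by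
        intro v
        apply Subtype.ext
        rw [hπapp, haJ, hbJ, hJapp]
        abel
      clear_value J π ω' p W y
      refine ⟨J, ?_, ?_, ?_, ?_⟩
      · ext v
        have h1 : J (J v) = -(ω y (J v)) • y - ω x (J v) • x + ((J' (π (J v))) : V) :=
          hJapp _
        rw [haJ, hbJ, hπJ, hJ'2] at h1
        simp only [LinearMap.comp_apply, LinearMap.neg_apply, LinearMap.id_apply]
        rw [h1]
        push_cast
        rw [hπapp v]
        module
      · intro v u
        rw [hω (J v) (J u), hω v u, haJ, haJ, hbJ, hbJ, hπJ, hπJ]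
        have h2 : ω ((J' (π v) : V)) ((J' (π u) : V)) = ω ((π v : V)) ((π u : V)) := by
          rw [← hω'app, ← hω'app, hJc]
        rw [h2]
        ring
      · intro v u
        rw [hω v (J u), hω u (J v), haJ, haJ, hbJ, hbJ, hπJ, hπJ]
        have h2 : ω ((π v : V)) ((J' (π u) : V)) = ω ((π u : V)) ((J' (π v) : V)) := by
          rw [← hω'app, ← hω'app, hJs]
        rw [h2]
        ring
      · intro v hv
        rw [hω v (J v), haJ, hbJ, hπJ]
        by_cases hπv : π v = 0
        · have hab : ¬(ω x v = 0 ∧ ω y v = 0) := by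
            rintro ⟨ha, hb⟩
            apply hv
            have h3 := hπapp v
            rw [hπv, ha, hb] at h3
            simpa using h3.symm
          rw [hπv]
          simp only [map_zero, Submodule.coe_zero, LinearMap.zero_apply]
          rcases not_and_or.mp hab with h | h
          · nlinarith [mul_self_nonneg (ω x v), mul_self_nonneg (ω y v),
              mul_self_pos.mpr h]
          · nlinarith [mul_self_nonneg (ω x v), mul_self_nonneg (ω y v),
              mul_self_pos.mpr h]
        · have hpos := hJp (π v) hπv
          rw [hω'app] at hpos
          nlinarith [mul_self_nonneg (ω x v), mul_self_nonneg (ω y v)]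
    · push_neg at hV
      refine ⟨0, ?_, ?_, ?_, ?_⟩
      · ext v; simp [hV v]
      · intro a b; simp [hV a]
      · intro a b; simp [hV a, hV b]
      · intro a ha; exact absurd (hV a) ha

theorem exists_compatible_complex_structure
    {V : Type*} [AddCommGroup V] [Module ℝ V] [FiniteDimensional ℝ V]
    (ω : V →ₗ[ℝ] V →ₗ[ℝ] ℝ)
    (halt : ∀ x : V, ω x x = 0)
    (hnondeg : ∀ x : V, (∀ y : V, ω x y = 0) → x = 0) :
    ∃ J : V →ₗ[ℝ] V,
      J ∘ₗ J = -LinearMap.id ∧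
      (∀ x y : V, ω (J x) (J y) = ω x y) ∧
      (∀ x y : V, ω x (J y) = ω y (J x)) ∧
      (∀ x : V, x ≠ 0 → 0 < ω x (J x)) := by
  exact aux_compatible (Module.finrank ℝ V) ω le_rfl halt hnondeg
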